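/- arXiv:2501.04311 — 5 statements merged into one kernel-verified Lean document; each statement's English description precedes it below -/
import Mathlib

section
/- For all x in the interval [-2, 0), the function g(x) := 2x - 2x^2 - (4/3)x^3 + (7/5)·θ·(-x^2 - 2x)^{3/2} is strictly negative, where θ := sqrt(5 - π²/3). -/
set_option maxHeartbeats 1000000

open Real

theorem stmt_0 :
    ∀ x ∈ Set.Ico (-2 : ℝ) 0,
      2*x - 2*x^2 - (4/3)*x^3
        + (7/5) * Real.sqrt (5 - Real.pi^2/3) * (-x^2 - 2*x) ^ ((3:ℝ)/2) < 0 := by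
  intro x hx
  obtain ⟨h1, h2⟩ := hx
  have hpi1 : Real.pi > 3.141592 := Real.pi_gt_d6
  have hpi2 : Real.pi < 3.15 := by linarith [Real.pi_lt_d2]
  have hθnn : (0:ℝ) ≤ 5 - Real.pi^2/3 := by nlinarith
  have hθ0 : 0 ≤ Real.sqrt (5 - Real.pi^2/3) := Real.sqrt_nonneg _
  have hθsq : (Real.sqrt (5 - Real.pi^2/3))^2 = 5 - Real.pi^2/3 := Real.sq_sqrt hθnn
  have hy : 0 ≤ -x^2 - 2*x := by nlinarith
  have hr0 : 0 ≤ (-x^2 - 2*x) ^ ((3:ℝ)/2) := Real.rpow_nonneg hy _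
  have hrsq : ((-x^2 - 2*x) ^ ((3:ℝ)/2))^2 = (-x^2 - 2*x)^3 := by
    rw [← Real.rpow_natCast ((-x^2 - 2*x) ^ ((3:ℝ)/2)) 2, ← Real.rpow_mul hy]
    rw [← Real.rpow_natCast (-x^2 - 2*x) 3]; congr 1; norm_num
  have hs0 : 0 ≤ (7/5) * Real.sqrt (5 - Real.pi^2/3) * (-x^2 - 2*x) ^ ((3:ℝ)/2) := by
    positivity
  have hq : 0 < 2 - 2*x - (4/3)*x^2 := by nlinarith
  have hP : 0 < -2*x + 2*x^2 + (4/3)*x^3 := by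
    nlinarith [mul_pos (neg_pos.mpr h2) hq]
  have hx2 : (0:ℝ) ≤ x + 2 := by linarith
  have hxsq : 0 < x^2 := by nlinarith [mul_pos (neg_pos.mpr h2) (neg_pos.mpr h2)]
  have haux : (336/100)*(-x)*(2+x)^3 < (2-2*x-(4/3)*x^2)^2 := by
    nlinarith [sq_nonneg (x+1/2), sq_nonneg (x+2), sq_nonneg (x*(x+2)),
      mul_nonneg (neg_nonneg.mpr h2.le) (sq_nonneg (x+2)),
      mul_nonneg hx2 (sq_nonneg (x+1/2)),
      mul_nonneg (neg_nonneg.mpr h2.le) (sq_nonneg (x+1/2)),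
      sq_nonneg (x^2+x), mul_nonneg (sq_nonneg x) hx2]
  have hc : (49/25)*(5 - Real.pi^2/3) ≤ 336/100 := by nlinarith
  have hy3 : 0 ≤ (-x^2 - 2*x)^3 := by positivity
  have h6 := mul_lt_mul_of_pos_left haux hxsq
  have key : ((7/5) * Real.sqrt (5 - Real.pi^2/3) * (-x^2 - 2*x) ^ ((3:ℝ)/2))^2
      < (-2*x + 2*x^2 + (4/3)*x^3)^2 := by
    have hsq : ((7/5) * Real.sqrt (5 - Real.pi^2/3) * (-x^2 - 2*x) ^ ((3:ℝ)/2))^2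
        = (49/25) * (5 - Real.pi^2/3) * (-x^2 - 2*x)^3 := by
      rw [mul_pow, mul_pow, hrsq, hθsq]; ring
    rw [hsq]
    linarith [h6, mul_nonneg (sub_nonneg.mpr hc) hy3]
  nlinarith [key, hs0, hP]
end

section
/- Suppose x* ∈ ((-3+√5)/2, 0) satisfies sqrt(1-(1+x*)²) = (5/(21θ))·(2 - 4x* - 4x*²)/(1+x*) with θ = sqrt(5-π²/3). Then g(x*) = 2x*(x*² + 3x* + 1)/(3(1+x*)), where g(x) = 2x - 2x² - (4/3)x³ + (7/5)θ(-x²-2x)^{3/2}. Moreover 2x(x²+3x+1)/(3(1+x)) < 0 for all x ∈ ((-3+√5)/2, 0). -/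
open Real

theorem stmt_3 (θ : ℝ) (hθ : θ = Real.sqrt (5 - Real.pi^2/3))
    (g : ℝ → ℝ)
    (hg : ∀ x, g x = 2*x - 2*x^2 - (4/3)*x^3 + (7/5)*θ*(-x^2 - 2*x) ^ ((3:ℝ)/2))
    (x : ℝ) (hx : x ∈ Set.Ioo ((-3 + Real.sqrt 5)/2) (0 : ℝ))
    (hcrit : Real.sqrt (1 - (1 + x)^2) = (5/(21*θ)) * (2 - 4*x - 4*x^2)/(1 + x)) :
    g x = 2*x*(x^2 + 3*x + 1)/(3*(1 + x)) ∧
    ∀ y ∈ Set.Ioo ((-3 + Real.sqrt 5)/2) (0 : ℝ),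
      2*y*(y^2 + 3*y + 1)/(3*(1 + y)) < 0 := by
  have hs5 : Real.sqrt 5 ^ 2 = 5 := Real.sq_sqrt (by norm_num)
  have hs5pos : (0:ℝ) < Real.sqrt 5 := Real.sqrt_pos.mpr (by norm_num)
  have hlb : ∀ y : ℝ, y ∈ Set.Ioo ((-3 + Real.sqrt 5)/2) (0 : ℝ) →
      0 < 1 + y ∧ 0 < y^2 + 3*y + 1 := by
    intro y hy
    obtain ⟨h1, h2⟩ := hy
    constructor
    · nlinarith [hs5, hs5pos]
    · nlinarith [hs5, hs5pos, sq_nonneg (2*y + 3 - Real.sqrt 5)]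
  obtain ⟨hx1, hx2⟩ := hlb x hx
  have hθpos : 0 < θ := by
    rw [hθ]
    apply Real.sqrt_pos.mpr
    nlinarith [Real.pi_lt_d2, Real.pi_pos]
  have ha : 0 < -x^2 - 2*x := by nlinarith [hx.2]
  have hsq : Real.sqrt (-x^2 - 2*x) = (5/(21*θ)) * (2 - 4*x - 4*x^2)/(1 + x) := by
    rw [← hcrit]; ring_nf
  have hrpow : (-x^2 - 2*x) ^ ((3:ℝ)/2) = (-x^2 - 2*x) * Real.sqrt (-x^2 - 2*x) := by
    rw [show (3:ℝ)/2 = 1 + 1/2 by norm_num, Real.rpow_add ha, Real.rpow_one,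
      ← Real.sqrt_eq_rpow]
  constructor
  · rw [hg, hrpow, hsq]
    field_simp
    ring
  · intro y hy
    obtain ⟨hy1, hy2⟩ := hlb y hy
    have hy0 : y < 0 := hy.2
    apply div_neg_of_neg_of_pos
    · nlinarith
    · linarith
end

section
/- Define E(Z₁,Z₂) := Z₁² + Z₂² + 2Z₁ and P_δ(Z₁,Z₂) := (1+δ)(Z₁²+Z₂²) + 2Z₁Z₂² + (2/3)Z₁³ + 6δ(|Z₁|Z₂² + |Z₁|³) - 2(1 - δ - ((2/3)+δ)·(21/20)·θ·Z₂)·Z₂², with θ = sqrt(5-π²/3). There exist δ₂, δ₃ > 0 such that for all 0 < δ < δ₂ and all (Z₁,Z₂) ∈ ℝ² with |E(Z₁,Z₂)| ≤ δ₃, one has P_δ(Z₁,Z₂) - (1/δ)|E(Z₁,Z₂)|² ≤ 0. -/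
open Real

set_option maxHeartbeats 4000000

private lemma stmt4_caseA (Z₁ Z₂ δ θ e a b : ℝ)
    (he : e = Z₁^2 + Z₂^2 + 2*Z₁) (heL : -1e-7 ≤ e) (heU : e ≤ 1e-7)
    (ha0 : 0 ≤ a) (hb0 : 0 ≤ b) (ha2 : a^2 = Z₁^2) (hb2 : b^2 = Z₂^2)
    (haZ : Z₁ ≤ a) (haZ' : -a ≤ Z₁) (hbZ : Z₂ ≤ b) (hbZ' : -b ≤ Z₂)
    (hδ0 : 0 ≤ δ) (hδu : δ ≤ 1e-7) (hθ0 : 0 ≤ θ) (hθub : θ ≤ 1.308)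
    (hAa : a ≤ 1/20) (hAb : b ≤ 1/20) :
    (1 + δ)*(Z₁^2 + Z₂^2) + 2*Z₁*Z₂^2 + (2/3)*Z₁^3
        + 6*δ*(a * Z₂^2 + a ^ 3)
        - 2*(1 - δ - ((2/3) + δ)*(21/20)*θ*Z₂)*Z₂^2 ≤ e^2 := by
  have hS : Z₁^2 + Z₂^2 ≤ 1/200 := by nlinarith
  have h1 : 2*Z₁*Z₂^2 ≤ 0.1*Z₂^2 := by
    nlinarith [mul_nonneg (by linarith : (0:ℝ) ≤ a - Z₁) (sq_nonneg Z₂),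
      mul_nonneg (by linarith : (0:ℝ) ≤ 1/20 - a) (sq_nonneg Z₂)]
  have h2 : (2/3)*Z₁^3 ≤ (1/30)*Z₁^2 := by
    nlinarith [mul_nonneg (by linarith : (0:ℝ) ≤ a - Z₁) (sq_nonneg Z₁),
      mul_nonneg (by linarith : (0:ℝ) ≤ 1/20 - a) (sq_nonneg Z₁)]
  have h3a : 6*δ*(a*Z₂^2) ≤ 1e-6*Z₂^2 := by
    nlinarith [mul_nonneg (by linarith : (0:ℝ) ≤ 1e-7 - δ) (mul_nonneg ha0 (sq_nonneg Z₂)),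
      mul_nonneg (mul_nonneg hδ0 (by linarith : (0:ℝ) ≤ 1/20 - a)) (sq_nonneg Z₂)]
  have h3b : 6*δ*a^3 ≤ 1e-6*Z₁^2 := by
    nlinarith [mul_nonneg (by linarith : (0:ℝ) ≤ 1e-7 - δ) (pow_nonneg ha0 3),
      mul_nonneg (mul_nonneg hδ0 (by linarith : (0:ℝ) ≤ 1/20 - a)) (sq_nonneg Z₁)]
  have h4 : 2*((2/3) + δ)*(21/20)*θ*Z₂*Z₂^2 ≤ 0.0916*Z₂^2 := by
    have hc : 2*((2/3) + δ)*(21/20)*θ ≤ 1.8313 := by nlinarith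
    have hc0 : 0 ≤ 2*((2/3) + δ)*(21/20)*θ := by positivity
    have hz : Z₂*Z₂^2 ≤ (1/20)*Z₂^2 := by
      nlinarith [mul_nonneg (by linarith : (0:ℝ) ≤ b - Z₂) (sq_nonneg Z₂),
        mul_nonneg (by linarith : (0:ℝ) ≤ 1/20 - b) (sq_nonneg Z₂)]
    nlinarith [sq_nonneg Z₂, mul_nonneg hc0 (sq_nonneg Z₂)]
  have h5 : Z₁^2 ≤ 0.51*e^2 + 0.01*Z₂^2 := by
    have hA1 : 4*Z₁^2 = (e - Z₁^2 - Z₂^2)^2 := by rw [he]; ring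
    nlinarith [sq_nonneg (e + Z₁^2 + Z₂^2),
      mul_nonneg (by linarith : (0:ℝ) ≤ 1/200 - (Z₁^2+Z₂^2))
        (by positivity : (0:ℝ) ≤ Z₁^2 + Z₂^2), sq_nonneg e]
  have hδZ : δ*(Z₁^2 + Z₂^2) ≤ 1e-7*(Z₁^2+Z₂^2) := by nlinarith [sq_nonneg Z₁, sq_nonneg Z₂]
  have hδZ2 : δ*Z₂^2 ≤ 1e-7*Z₂^2 := by nlinarith [sq_nonneg Z₂]
  nlinarith [sq_nonneg Z₂, sq_nonneg Z₁, sq_nonneg e]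

private lemma stmt4_caseB1 (Z₁ Z₂ δ θ e a b : ℝ)
    (he : e = Z₁^2 + Z₂^2 + 2*Z₁) (heL : -1e-7 ≤ e) (heU : e ≤ 1e-7)
    (hb0 : 0 ≤ b) (hb2 : b^2 = Z₂^2) (hbZ : Z₂ ≤ b)
    (hδ0 : 0 ≤ δ) (hδu : δ ≤ 1e-7) (hθ0 : 0 ≤ θ) (hθub : θ ≤ 1.308)
    (haneg : a = -Z₁) (ht : 1/1600 ≤ -Z₁) (hZ1l : -2.001 ≤ Z₁)
    (hcub : 2*((2/3) + δ)*(21/20)*θ*Z₂*Z₂^2 ≤ 1.8313 * b^3)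
    (hB : b ≤ 1/2) :
    (1 + δ)*(Z₁^2 + Z₂^2) + 2*Z₁*Z₂^2 + (2/3)*Z₁^3
        + 6*δ*(a * Z₂^2 + a ^ 3)
        - 2*(1 - δ - ((2/3) + δ)*(21/20)*θ*Z₂)*Z₂^2 ≤ 0 := by
  subst haneg
  have hs : Z₂^2 = e - 2*Z₁ - Z₁^2 := by linarith
  have hb3 : 1.8313 * b^3 ≤ 0.91565 * Z₂^2 := by
    nlinarith [mul_nonneg (by linarith : (0:ℝ) ≤ 1/2 - b) (sq_nonneg b)]
  have h6a : 6*δ*((-Z₁) * Z₂^2) ≤ 1.3e-6*Z₂^2 := by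
    nlinarith [mul_nonneg hδ0 (mul_nonneg (by linarith : (0:ℝ) ≤ -Z₁) (sq_nonneg Z₂)),
      mul_nonneg (by linarith : (0:ℝ) ≤ 1e-7 - δ) (mul_nonneg (by linarith : (0:ℝ) ≤ -Z₁) (sq_nonneg Z₂)),
      mul_nonneg (mul_nonneg hδ0 (by linarith : (0:ℝ) ≤ 2.001 + Z₁)) (sq_nonneg Z₂)]
  have h6b : 6*δ*(-Z₁)^3 ≤ 5e-6*Z₁^2 := by
    nlinarith [mul_nonneg (by linarith : (0:ℝ) ≤ 1e-7 - δ) (mul_nonneg (by linarith : (0:ℝ) ≤ -Z₁) (sq_nonneg Z₁)),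
      mul_nonneg (mul_nonneg hδ0 (by linarith : (0:ℝ) ≤ 2.001 + Z₁)) (sq_nonneg Z₁)]
  have hZ12 : 2*Z₁*Z₂^2 = 2*Z₁*e - 4*Z₁^2 - 2*Z₁^3 := by rw [hs]; ring
  have hδZ : δ*(Z₁^2 + Z₂^2) ≤ 1e-7*(Z₁^2+Z₂^2) := by nlinarith [sq_nonneg Z₁, sq_nonneg Z₂]
  have hδZ2 : δ*Z₂^2 ≤ 1e-7*Z₂^2 := by nlinarith [sq_nonneg Z₂]
  have hcore : -(4/3)*Z₁^3 ≤ 1.9*Z₁^2 - 2.1*Z₁ - 1e-4 := by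
    nlinarith [mul_nonneg (mul_nonneg (by linarith : (0:ℝ) ≤ -Z₁ - 1/1600)
        (by linarith : (0:ℝ) ≤ 2.001 + Z₁)) (by linarith : (0:ℝ) ≤ -Z₁),
      mul_nonneg (by linarith : (0:ℝ) ≤ -Z₁ - 1/1600) (by linarith : (0:ℝ) ≤ 2.001 + Z₁)]
  have hmul : 2*Z₁*e ≤ 4.1e-7 - 0*e := by nlinarith
  nlinarith [sq_nonneg Z₂, sq_nonneg Z₁]

private lemma stmt4_caseB2 (Z₁ Z₂ δ θ e a b : ℝ)
    (he : e = Z₁^2 + Z₂^2 + 2*Z₁) (heL : -1e-7 ≤ e) (heU : e ≤ 1e-7)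
    (hb0 : 0 ≤ b) (hb2 : b^2 = Z₂^2) (hbZ : Z₂ ≤ b) (hbu : b ≤ 1.001)
    (hδ0 : 0 ≤ δ) (hδu : δ ≤ 1e-7) (hθ0 : 0 ≤ θ) (hθub : θ ≤ 1.308)
    (haneg : a = -Z₁) (ht : 1/1600 ≤ -Z₁) (hZ1l : -2.001 ≤ Z₁)
    (hcub : 2*((2/3) + δ)*(21/20)*θ*Z₂*Z₂^2 ≤ 1.8313 * b^3)
    (hB : 1/2 ≤ b) :
    (1 + δ)*(Z₁^2 + Z₂^2) + 2*Z₁*Z₂^2 + (2/3)*Z₁^3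
        + 6*δ*(a * Z₂^2 + a ^ 3)
        - 2*(1 - δ - ((2/3) + δ)*(21/20)*θ*Z₂)*Z₂^2 ≤ 0 := by
  subst haneg
  have hs : Z₂^2 = e - 2*Z₁ - Z₁^2 := by linarith
  have hs1 : 0.2499 ≤ Z₂^2 := by nlinarith
  have ht1 : 0.13 ≤ -Z₁ := by nlinarith [sq_nonneg (1 + Z₁)]
  have ht2 : -Z₁ ≤ 1.87 := by nlinarith [sq_nonneg (1 + Z₁)]
  set t : ℝ := -Z₁ with htdef
  have hσ : Z₂^2 ≤ 2*t - t^2 + 1e-7 := by nlinarith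
  have hcore : 1.8313^2 * (2*t - t^2 + 1e-7)^3 ≤ (2*t + 2*t^2 - (4/3)*t^3 - 0.03)^2 := by
    nlinarith [mul_nonneg (by linarith : (0:ℝ) ≤ t - 0.13) (by linarith : (0:ℝ) ≤ 1.87 - t),
      mul_nonneg (mul_nonneg (by linarith : (0:ℝ) ≤ t - 0.13) (by linarith : (0:ℝ) ≤ 1.87 - t)) (sq_nonneg (t-1)),
      mul_nonneg (mul_nonneg (by linarith : (0:ℝ) ≤ t - 0.13) (by linarith : (0:ℝ) ≤ 1.87 - t)) (sq_nonneg (t-0.5)),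
      mul_nonneg (mul_nonneg (by linarith : (0:ℝ) ≤ t - 0.13) (by linarith : (0:ℝ) ≤ 1.87 - t)) (sq_nonneg (t-1.5)),
      mul_nonneg (mul_nonneg (by linarith : (0:ℝ) ≤ t - 0.13) (by linarith : (0:ℝ) ≤ 1.87 - t)) (sq_nonneg t),
      sq_nonneg ((t-0.13)*(1.87-t)), sq_nonneg (t-1), sq_nonneg (t-0.13), sq_nonneg (1.87-t),
      mul_nonneg (mul_nonneg (by linarith : (0:ℝ) ≤ t - 0.13) (by linarith : (0:ℝ) ≤ t - 0.13)) (by linarith : (0:ℝ) ≤ 1.87 - t),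
      mul_nonneg (mul_nonneg (by linarith : (0:ℝ) ≤ 1.87 - t) (by linarith : (0:ℝ) ≤ 1.87 - t)) (by linarith : (0:ℝ) ≤ t - 0.13)]
  have hmono : (Z₂^2)^3 ≤ (2*t - t^2 + 1e-7)^3 := by
    have h0 : (0:ℝ) ≤ Z₂^2 := sq_nonneg _
    exact pow_le_pow_left₀ h0 hσ 3
  have hQ0 : 0.2 ≤ 2*t + 2*t^2 - (4/3)*t^3 - 0.03 := by
    nlinarith [mul_nonneg (mul_nonneg (by linarith : (0:ℝ) ≤ t - 0.13) (by linarith : (0:ℝ) ≤ 1.87 - t)) (by linarith : (0:ℝ) ≤ t),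
      mul_nonneg (by linarith : (0:ℝ) ≤ t - 0.13) (by linarith : (0:ℝ) ≤ 1.87 - t)]
  have hQsq : (1.8313 * b * Z₂^2)^2 ≤ (2*t + 2*t^2 - (4/3)*t^3 - 0.03)^2 := by
    calc (1.8313 * b * Z₂^2)^2 = 1.8313^2 * (Z₂^2)^3 := by rw [← hb2]; ring
    _ ≤ 1.8313^2 * (2*t - t^2 + 1e-7)^3 := by nlinarith
    _ ≤ _ := hcore
  have hQ : 1.8313 * b * Z₂^2 ≤ 2*t + 2*t^2 - (4/3)*t^3 - 0.03 := by
    nlinarith [mul_nonneg (mul_nonneg (by norm_num : (0:ℝ) ≤ 1.8313) hb0) (sq_nonneg Z₂)]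
  have hbb3 : 1.8313 * b^3 = 1.8313 * b * Z₂^2 := by rw [← hb2]; ring
  have h6a : 6*δ*(t * Z₂^2) ≤ 1.3e-6 := by
    nlinarith [mul_nonneg (by linarith : (0:ℝ) ≤ 1e-7 - δ) (mul_nonneg (by linarith : (0:ℝ) ≤ t) (sq_nonneg Z₂)),
      mul_nonneg (mul_nonneg hδ0 (by linarith : (0:ℝ) ≤ 2.001 - t)) (sq_nonneg Z₂),
      mul_nonneg (mul_nonneg hδ0 (by linarith : (0:ℝ) ≤ t)) (by nlinarith : (0:ℝ) ≤ 1.003 - Z₂^2)]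
  have h6b : 6*δ*t^3 ≤ 5e-6 := by
    nlinarith [mul_nonneg (by linarith : (0:ℝ) ≤ 1e-7 - δ) (mul_nonneg (by linarith : (0:ℝ) ≤ t) (sq_nonneg Z₁)),
      mul_nonneg (mul_nonneg hδ0 (by linarith : (0:ℝ) ≤ 2.001 - t)) (sq_nonneg Z₁),
      mul_nonneg (mul_nonneg hδ0 (by linarith : (0:ℝ) ≤ t)) (by nlinarith : (0:ℝ) ≤ 4.005 - Z₁^2)]
  have hZ12 : 2*Z₁*Z₂^2 = 2*Z₁*e - 4*Z₁^2 - 2*Z₁^3 := by rw [hs]; ring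
  have hδZ : δ*(Z₁^2 + Z₂^2) ≤ 1e-7*(Z₁^2+Z₂^2) := by nlinarith [sq_nonneg Z₁, sq_nonneg Z₂]
  have hδZ2 : δ*Z₂^2 ≤ 1e-7*Z₂^2 := by nlinarith [sq_nonneg Z₂]
  have hZe : 2*Z₁*e ≤ 4.1e-7 := by nlinarith
  nlinarith [sq_nonneg Z₂, sq_nonneg Z₁]

theorem stmt_4 (θ : ℝ) (hθ : θ = Real.sqrt (5 - Real.pi^2/3))
    (E P : ℝ → ℝ → ℝ → ℝ)
    (hE : ∀ δ Z₁ Z₂, E δ Z₁ Z₂ = Z₁^2 + Z₂^2 + 2*Z₁)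
    (hP : ∀ δ Z₁ Z₂, P δ Z₁ Z₂ =
      (1 + δ)*(Z₁^2 + Z₂^2) + 2*Z₁*Z₂^2 + (2/3)*Z₁^3
        + 6*δ*(abs Z₁ * Z₂^2 + abs Z₁ ^ 3)
        - 2*(1 - δ - ((2/3) + δ)*(21/20)*θ*Z₂)*Z₂^2) :
    ∃ δ₂ > (0:ℝ), ∃ δ₃ > (0:ℝ), ∀ δ : ℝ, 0 < δ → δ < δ₂ →
      ∀ Z₁ Z₂ : ℝ, |E δ Z₁ Z₂| ≤ δ₃ →
        P δ Z₁ Z₂ - (1/δ) * |E δ Z₁ Z₂|^2 ≤ 0 := by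
  have hπl : (3.141592 : ℝ) < Real.pi := Real.pi_gt_d6
  have hπu : Real.pi < 3.15 := by
    have := Real.pi_lt_d2
    linarith
  have hθ0 : 0 ≤ θ := hθ ▸ Real.sqrt_nonneg _
  have hθsq : θ^2 = 5 - Real.pi^2/3 := by
    rw [hθ, sq_sqrt]; nlinarith
  have hθub : θ ≤ 1.308 := by nlinarith
  refine ⟨1e-7, by norm_num, 1e-7, by norm_num, ?_⟩
  intro δ hδ0 hδ2 Z₁ Z₂ hEb
  rw [hE] at hEb
  rw [hE, hP]
  set e : ℝ := Z₁^2 + Z₂^2 + 2*Z₁ with he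
  have he2 : e^2 = |e|^2 := (sq_abs e).symm
  have he1 : -1e-7 ≤ e ∧ e ≤ 1e-7 := abs_le.mp hEb
  obtain ⟨heL, heU⟩ := he1
  have hq : e^2 ≤ (1/δ) * |e|^2 := by
    rw [← he2]
    have h1 : (1:ℝ) ≤ 1/δ := by
      rw [le_div_iff₀ hδ0]; linarith
    nlinarith [sq_nonneg e]
  suffices hmain : (1 + δ)*(Z₁^2 + Z₂^2) + 2*Z₁*Z₂^2 + (2/3)*Z₁^3
        + 6*δ*(|Z₁| * Z₂^2 + |Z₁| ^ 3)
        - 2*(1 - δ - ((2/3) + δ)*(21/20)*θ*Z₂)*Z₂^2 ≤ e^2 by linarith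
  set a : ℝ := |Z₁| with ha
  set b : ℝ := |Z₂| with hb
  have ha0 : 0 ≤ a := abs_nonneg _
  have hb0 : 0 ≤ b := abs_nonneg _
  have ha2 : a^2 = Z₁^2 := sq_abs _
  have hb2 : b^2 = Z₂^2 := sq_abs _
  have haZ : Z₁ ≤ a := le_abs_self _
  have haZ' : -a ≤ Z₁ := neg_abs_le _
  have hbZ : Z₂ ≤ b := le_abs_self _
  have hbZ' : -b ≤ Z₂ := neg_abs_le _
  have hδu : δ ≤ 1e-7 := le_of_lt hδ2
  have hδ0' : 0 ≤ δ := le_of_lt hδ0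
  have hZ1u : Z₁ ≤ 1e-7 := by nlinarith [sq_nonneg Z₁, sq_nonneg Z₂]
  have hZ1l : -2.001 ≤ Z₁ := by nlinarith [sq_nonneg Z₂, sq_nonneg (Z₁ + 1)]
  have hbu : b ≤ 1.001 := by nlinarith [sq_nonneg (Z₁ + 1)]
  by_cases hA : a ≤ 1/20 ∧ b ≤ 1/20
  · exact stmt4_caseA Z₁ Z₂ δ θ e a b he heL heU ha0 hb0 ha2 hb2 haZ haZ' hbZ hbZ'
      hδ0' hδu hθ0 hθub hA.1 hA.2
  · have hsq : 0 ≤ e^2 := sq_nonneg e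
    have ht : 1/1600 ≤ -Z₁ := by
      rcases not_and_or.mp hA with h | h
      · push_neg at h
        rcases abs_cases Z₁ with ⟨h1, _⟩ | ⟨h1, _⟩ <;> [skip; skip] <;>
          simp only [← ha] at h1 <;> linarith
      · push_neg at h
        nlinarith [sq_nonneg Z₁]
    have haneg : a = -Z₁ := by
      rcases abs_cases Z₁ with ⟨h1, h2⟩ | ⟨h1, _⟩ <;> simp only [← ha] at h1 <;> linarith
    have hcub : 2*((2/3) + δ)*(21/20)*θ*Z₂*Z₂^2 ≤ 1.8313 * b^3 := by
      have hθδ0 : 0 ≤ 2*((2/3) + δ)*(21/20)*θ := by positivity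
      have hcoef : 2*((2/3) + δ)*(21/20)*θ ≤ 1.8313 := by nlinarith
      have h1 : Z₂*Z₂^2 ≤ b^3 := by nlinarith
      nlinarith [pow_nonneg hb0 3]
    have h0 : (1 + δ)*(Z₁^2 + Z₂^2) + 2*Z₁*Z₂^2 + (2/3)*Z₁^3
        + 6*δ*(a * Z₂^2 + a ^ 3)
        - 2*(1 - δ - ((2/3) + δ)*(21/20)*θ*Z₂)*Z₂^2 ≤ 0 := by
      by_cases hB : b ≤ 1/2
      · exact stmt4_caseB1 Z₁ Z₂ δ θ e a b he heL heU hb0 hb2 hbZ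
          hδ0' hδu hθ0 hθub haneg ht hZ1l hcub hB
      · push_neg at hB
        exact stmt4_caseB2 Z₁ Z₂ δ θ e a b he heL heU hb0 hb2 hbZ hbu
          hδ0' hδu hθ0 hθub haneg ht hZ1l hcub (le_of_lt hB)
    exact h0.trans hsq
end

section
/- Let E(Z₁,Z₂) = Z₁² + Z₂² + 2Z₁. If E(Z₁,Z₂) = 0 and Z₁ ≠ 0, then P₀(Z₁,Z₂) := Z₁² + Z₂² + 2Z₁Z₂² + (2/3)Z₁³ - 2(1 - (7/10)θZ₂)Z₂² < 0, where θ = sqrt(5-π²/3). (Under E=0, P₀ reduces to 2Z₁ - 2Z₁² - (4/3)Z₁³ + (7/5)θ(-Z₁²-2Z₁)^{3/2} when Z₂ = sqrt(-Z₁²-2Z₁) ≥ 0.) -/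
open Real

lemma aux5 (t : ℝ) (h0 : 0 < t) (h2 : t ≤ 2) :
    3.352 * (t*(2-t))^3 < (2*t + 2*t^2 - (4/3)*t^3)^2 := by
  nlinarith [mul_pos h0 h0, mul_nonneg h0.le (sub_nonneg.mpr h2),
    mul_nonneg (mul_nonneg h0.le h0.le) (sub_nonneg.mpr h2),
    mul_nonneg (mul_nonneg (mul_nonneg h0.le h0.le) h0.le) (sub_nonneg.mpr h2),
    mul_nonneg (mul_nonneg h0.le (sub_nonneg.mpr h2)) (sub_nonneg.mpr h2),
    mul_nonneg (mul_nonneg h0.le h0.le) (sq_nonneg (t-1/3)),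
    mul_nonneg (mul_nonneg h0.le (sub_nonneg.mpr h2)) (sq_nonneg (t-1/3)),
    mul_nonneg (mul_nonneg h0.le h0.le) (sq_nonneg (t-2)), sq_nonneg (t*(2-t))]

set_option maxHeartbeats 1000000 in
theorem stmt_5 (θ : ℝ) (hθ : θ = Real.sqrt (5 - Real.pi^2/3))
    (Z₁ Z₂ : ℝ) (hE : Z₁^2 + Z₂^2 + 2*Z₁ = 0) (hZ₁ : Z₁ ≠ 0) :
    Z₁^2 + Z₂^2 + 2*Z₁*Z₂^2 + (2/3)*Z₁^3 - 2*(1 - (7/10)*θ*Z₂)*Z₂^2 < 0 := by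
  have hpi_lt : Real.pi < 3.141593 := Real.pi_lt_d6
  have hpi_gt : (3.141592 : ℝ) < Real.pi := Real.pi_gt_d6
  have hpos : (0:ℝ) ≤ 5 - Real.pi^2/3 := by nlinarith
  have hθ2 : θ^2 = 5 - Real.pi^2/3 := by rw [hθ]; exact Real.sq_sqrt hpos
  have hθ0 : 0 ≤ θ := hθ ▸ Real.sqrt_nonneg _
  have hθK : (49/25)*θ^2 ≤ 3.352 := by nlinarith [sq_nonneg (Real.pi - 3.141592)]
  have hs : Z₂^2 = -(Z₁^2 + 2*Z₁) := by linarith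
  have hZ1l : -2 ≤ Z₁ := by nlinarith [sq_nonneg Z₂]
  have hZ1u : Z₁ < 0 := by
    rcases lt_or_gt_of_ne hZ₁ with h | h
    · exact h
    · exfalso; nlinarith [sq_nonneg Z₂]
  have h0 : 0 < -Z₁ := by linarith
  have h2 : -Z₁ ≤ 2 := by linarith
  have hR : 0 < -2*Z₁ + 2*Z₁^2 + (4/3)*Z₁^3 := by nlinarith
  have key : (7/5)*θ*Z₂^3 < -2*Z₁ + 2*Z₁^2 + (4/3)*Z₁^3 := by
    rcases le_or_gt Z₂ 0 with hz | hz
    · have h3 : Z₂^3 ≤ 0 := by nlinarith [sq_nonneg Z₂]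
      nlinarith [mul_nonneg hθ0 (neg_nonneg.mpr h3)]
    · have hXnn : 0 ≤ ((-Z₁)*(2-(-Z₁)))^3 := by
        apply pow_nonneg
        nlinarith
      have h6 : Z₂^6 = ((-Z₁)*(2-(-Z₁)))^3 := by
        rw [show Z₂^6 = (Z₂^2)^3 by ring, hs]; ring
      have hsq : ((7/5)*θ*Z₂^3)^2 < (-2*Z₁ + 2*Z₁^2 + (4/3)*Z₁^3)^2 := by
        have e1 : ((7/5)*θ*Z₂^3)^2 = (49/25)*θ^2*((-Z₁)*(2-(-Z₁)))^3 := by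
          linear_combination ((49:ℝ)/25*θ^2) * h6
        have e2 : (-2*Z₁ + 2*Z₁^2 + (4/3)*Z₁^3)^2
            = (2*(-Z₁) + 2*(-Z₁)^2 - (4/3)*(-Z₁)^3)^2 := by ring
        rw [e1, e2]
        calc (49/25)*θ^2*((-Z₁)*(2-(-Z₁)))^3
            ≤ 3.352*((-Z₁)*(2-(-Z₁)))^3 := mul_le_mul_of_nonneg_right hθK hXnn
          _ < _ := aux5 (-Z₁) h0 h2
      rcases le_or_gt ((7/5)*θ*Z₂^3) 0 with h | h
      · linarith
      · nlinarith [hsq, hR, h]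
  have hterm : Z₁^2 + Z₂^2 + 2*Z₁*Z₂^2 + (2/3)*Z₁^3 - 2*(1 - (7/10)*θ*Z₂)*Z₂^2
      = 2*Z₁ - 2*Z₁^2 - (4/3)*Z₁^3 + (7/5)*θ*Z₂^3 := by
    linear_combination (2*Z₁-1)*hE
  linarith [key, hterm]
end

section
/- Let Q : 𝐋 → ℝ, Q(s) := ∫_ℝ |ũ(ξ+s) - ũ(ξ)|² dξ, where ũ : ℝ → ℝ is C¹, strictly decreasing with integrable square-integrable derivative and limits u_± at ±∞. Then Q is even, Q(0)=0, and there exist β₁, β₂ > 0 such that ∂_s Q(s) ≥ β₁ for s > 1 and ∂_s Q(s) ≤ -β₂ for s < -1; consequently |s| ≤ Q(s)/min(β₁,β₂) + 1 for all s ∈ ℝ. -/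
open Real MeasureTheory Filter Set

section helpers

variable {u : ℝ → ℝ} {uminus uplus : ℝ}

lemma hlp_ub (hanti : StrictAnti u) (hbot : Tendsto u atBot (nhds uminus)) (x : ℝ) :
    u x ≤ uminus := by
  refine ge_of_tendsto hbot ?_
  filter_upwards [eventually_le_atBot x] with y hy
  exact hanti.antitone hy

lemma hlp_lb (hanti : StrictAnti u) (htop : Tendsto u atTop (nhds uplus)) (x : ℝ) :
    uplus ≤ u x := by
  refine le_of_tendsto htop ?_
  filter_upwards [eventually_ge_atTop x] with y hy
  exact hanti.antitone hy

lemma hlp_deriv_nonpos (hC1 : ContDiff ℝ 1 u) (hanti : StrictAnti u) (x : ℝ) :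
    deriv u x ≤ 0 := by
  have hd : HasDerivAt u (deriv u x) x := (hC1.differentiable one_ne_zero x).hasDerivAt
  refine le_of_tendsto (hasDerivAt_iff_tendsto_slope.mp hd) ?_
  filter_upwards [eventually_mem_nhdsWithin] with y (hy : y ≠ x)
  rcases lt_or_gt_of_ne hy with h' | h'
  · rw [slope_def_field]
    have := hanti h'
    apply div_nonpos_of_nonneg_of_nonpos <;> linarith
  · rw [slope_def_field]
    have := hanti h'
    apply div_nonpos_of_nonpos_of_nonneg <;> linarith

lemma hlp_ftc (hC1 : ContDiff ℝ 1 u) (a b : ℝ) :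
    ∫ x in a..b, deriv u x = u b - u a :=
  intervalIntegral.integral_deriv_eq_sub (fun x _ => (hC1.differentiable one_ne_zero x))
    ((hC1.continuous_deriv le_rfl).intervalIntegrable a b)

lemma hlp_total (hC1 : ContDiff ℝ 1 u) (hint : Integrable (deriv u))
    (htop : Tendsto u atTop (nhds uplus)) (hbot : Tendsto u atBot (nhds uminus)) :
    ∫ x, deriv u x = uplus - uminus := by
  have h1 : Tendsto (fun T : ℝ => ∫ x in (-T)..T, deriv u x) atTop (nhds (∫ x, deriv u x)) :=
    intervalIntegral_tendsto_integral hint tendsto_neg_atTop_atBot tendsto_id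
  have h2 : Tendsto (fun T : ℝ => ∫ x in (-T)..T, deriv u x) atTop (nhds (uplus - uminus)) := by
    simp only [hlp_ftc hC1]
    exact (htop.comp tendsto_id).sub (hbot.comp tendsto_neg_atTop_atBot)
  exact tendsto_nhds_unique h1 h2

end helpers

open Real MeasureTheory Filter Set

section helpers2

variable {u : ℝ → ℝ} {uminus uplus : ℝ}

lemma hlp_D_int (hC1 : ContDiff ℝ 1 u) (hanti : StrictAnti u)
    (htop : Tendsto u atTop (nhds uplus)) (hbot : Tendsto u atBot (nhds uminus))
    {s : ℝ} (hs : 0 ≤ s) :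
    Integrable (fun ξ => u ξ - u (ξ + s)) := by
  have hu : Continuous u := hC1.continuous
  have hc : Continuous fun ξ => u ξ - u (ξ + s) :=
    hu.sub (hu.comp (continuous_id.add continuous_const))
  refine integrable_of_intervalIntegral_norm_bounded (μ := volume) (l := atTop)
    (a := fun T : ℝ => -T) (b := fun T : ℝ => T) (s * (uminus - uplus))
    (fun i => (hc.integrableOn_Ioc : IntegrableOn _ _ volume)) tendsto_neg_atTop_atBot tendsto_id ?_
  filter_upwards [eventually_ge_atTop (0:ℝ)] with T hT
  have hnorm : ∀ ξ : ℝ, ‖u ξ - u (ξ + s)‖ = u ξ - u (ξ + s) := by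
    intro ξ
    rw [Real.norm_of_nonneg]
    exact sub_nonneg.mpr (hanti.antitone (by linarith))
  rw [intervalIntegral.integral_congr (fun ξ _ => hnorm ξ)]
  have hI1 : IntervalIntegrable u volume (-T) T := hu.intervalIntegrable _ _
  have hI2 : IntervalIntegrable (fun ξ => u (ξ + s)) volume (-T) T :=
    (hu.comp (continuous_id.add continuous_const)).intervalIntegrable _ _
  rw [intervalIntegral.integral_sub hI1 hI2, intervalIntegral.integral_comp_add_right u s]
  have hsplit1 : ∫ x in (-T)..T, u x =
      (∫ x in (-T)..(-T+s), u x) + ∫ x in (-T+s)..T, u x :=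
    (intervalIntegral.integral_add_adjacent_intervals (hu.intervalIntegrable _ _)
      (hu.intervalIntegrable _ _)).symm
  have hsplit2 : ∫ x in (-T+s)..(T+s), u x =
      (∫ x in (-T+s)..T, u x) + ∫ x in T..(T+s), u x :=
    (intervalIntegral.integral_add_adjacent_intervals (hu.intervalIntegrable _ _)
      (hu.intervalIntegrable _ _)).symm
  have hb1 : ∫ x in (-T)..(-T+s), u x ≤ s * uminus := by
    have : ∫ x in (-T)..(-T+s), u x ≤ ∫ _x in (-T)..(-T+s), uminus :=
      intervalIntegral.integral_mono_on (by linarith : -T ≤ -T + s)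
        (hu.intervalIntegrable _ _) intervalIntegrable_const
        (fun x _ => hlp_ub hanti hbot x)
    simpa using this
  have hb2 : s * uplus ≤ ∫ x in T..(T+s), u x := by
    have : ∫ _x in T..(T+s), uplus ≤ ∫ x in T..(T+s), u x :=
      intervalIntegral.integral_mono_on (by linarith : T ≤ T + s)
        intervalIntegrable_const (hu.intervalIntegrable _ _)
        (fun x _ => hlp_lb hanti htop x)
    simpa using this
  linarith

end helpers2
lemma hlp_key (u : ℝ → ℝ) (uminus uplus : ℝ)
    (hC1 : ContDiff ℝ 1 u) (hanti : StrictAnti u) (hint : Integrable (deriv u))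
    (htop : Tendsto u atTop (nhds uplus)) (hbot : Tendsto u atBot (nhds uminus)) :
    ∃ β > (0:ℝ), ∀ s1 s2 : ℝ, 1 < s1 → s1 < s2 →
      (∫ ξ : ℝ, (u (ξ + s1) - u ξ)^2) + β * (s2 - s1) ≤ ∫ ξ : ℝ, (u (ξ + s2) - u ξ)^2 := by
  have hu : Continuous u := hC1.continuous
  have hw_cont : Continuous (fun x : ℝ => -deriv u x) := (hC1.continuous_deriv le_rfl).neg
  have hw_nonneg : ∀ x, 0 ≤ -deriv u x := fun x => neg_nonneg.mpr (hlp_deriv_nonpos hC1 hanti x)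
  have hw_int : Integrable (fun x : ℝ => -deriv u x) := hint.neg
  have hub := hlp_ub hanti hbot
  have hlb := hlp_lb hanti htop
  have hgap : 0 < uminus - uplus := by
    have h1 := hub 0; have h2 := hlb 1
    have h3 := hanti (show (0:ℝ) < 1 by norm_num); linarith
  set β : ℝ := ∫ ζ : ℝ, (-deriv u ζ) * (u (ζ - 1) - u ζ) with hβ
  have hβ_ptnn : ∀ ζ : ℝ, 0 ≤ (-deriv u ζ) * (u (ζ - 1) - u ζ) := fun ζ =>
    mul_nonneg (hw_nonneg ζ) (le_of_lt (sub_pos.mpr (hanti (by linarith))))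
  have hβ_int : Integrable (fun ζ : ℝ => (-deriv u ζ) * (u (ζ - 1) - u ζ)) := by
    refine (hw_int.const_mul (uminus - uplus)).mono
      ((hw_cont.mul ((hu.comp (continuous_id.sub continuous_const)).sub hu)).aestronglyMeasurable)
      (Eventually.of_forall fun ζ => ?_)
    rw [Real.norm_of_nonneg (hβ_ptnn ζ),
      Real.norm_of_nonneg (mul_nonneg (by linarith) (hw_nonneg ζ))]
    have h1 : u (ζ - 1) - u ζ ≤ uminus - uplus := by
      have := hub (ζ - 1); have := hlb ζ; linarith
    have := mul_le_mul_of_nonneg_left h1 (hw_nonneg ζ)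
    linarith
  have hβpos : 0 < β := by
    rcases lt_or_eq_of_le (integral_nonneg (f := fun ζ : ℝ => (-deriv u ζ) * (u (ζ - 1) - u ζ)) hβ_ptnn) with h | h
    · exact h
    · exfalso
      have h0 : (fun ζ : ℝ => (-deriv u ζ) * (u (ζ - 1) - u ζ)) =ᵐ[volume] 0 :=
        (integral_eq_zero_iff_of_nonneg hβ_ptnn hβ_int).mp h.symm
      have hd0 : deriv u =ᵐ[volume] 0 := by
        filter_upwards [h0] with ζ hζ
        have hpos : 0 < u (ζ - 1) - u ζ := sub_pos.mpr (hanti (by linarith))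
        have hz : (-deriv u ζ) * (u (ζ - 1) - u ζ) = 0 := hζ
        rcases mul_eq_zero.mp hz with h' | h'
        · simpa using h'
        · exfalso; linarith
      have htot := hlp_total hC1 hint htop hbot
      rw [integral_congr_ae hd0] at htot
      simp only [Pi.zero_apply, integral_zero] at htot
      linarith
  refine ⟨β, hβpos, fun s1 s2 hs1 h12 => ?_⟩
  have hs2 : 1 < s2 := hs1.trans h12
  have h12' : s1 ≤ s2 := le_of_lt h12
  set qq : ℝ → ℝ := fun ξ => 2 * u ξ - u (ξ + s1) - u (ξ + s2) with hqq
  have hqq_cont : Continuous qq := by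
    apply Continuous.sub
    apply Continuous.sub
    · exact continuous_const.mul hu
    · exact hu.comp (continuous_id.add continuous_const)
    · exact hu.comp (continuous_id.add continuous_const)
  have hqq_nonneg : ∀ ξ, 0 ≤ qq ξ := by
    intro ξ
    have h1 : u (ξ + s1) ≤ u ξ := hanti.antitone (by linarith)
    have h2 : u (ξ + s2) ≤ u ξ := hanti.antitone (by linarith)
    simp only [hqq]; linarith
  have hqq_ub : ∀ ξ, qq ξ ≤ 2 * (uminus - uplus) := by
    intro ξ
    have := hub ξ; have := hlb (ξ + s1); have := hlb (ξ + s2)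
    simp only [hqq]; linarith
  set ν := volume.restrict (Ioc s1 s2) with hν
  haveI : IsFiniteMeasure ν := by
    constructor; rw [hν, Measure.restrict_apply_univ]; exact measure_Ioc_lt_top
  set f : ℝ → ℝ → ℝ := fun ξ t => (-deriv u (ξ + t)) * qq ξ with hf
  have hA : ∀ ξ : ℝ, (u (ξ + s2) - u ξ)^2 - (u (ξ + s1) - u ξ)^2 = ∫ t, f ξ t ∂ν := by
    intro ξ
    have e1 : ∫ t, f ξ t ∂ν = (∫ t, -deriv u (ξ + t) ∂ν) * qq ξ :=
      integral_mul_const (qq ξ) _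
    have e2 : ∫ t, -deriv u (ξ + t) ∂ν = ∫ t in s1..s2, -deriv u (ξ + t) :=
      (intervalIntegral.integral_of_le h12').symm
    have e3 : ∫ t in s1..s2, -deriv u (ξ + t) = u (ξ + s1) - u (ξ + s2) := by
      rw [intervalIntegral.integral_neg, intervalIntegral.integral_comp_add_left (deriv u) ξ,
        hlp_ftc hC1]
      ring
    rw [e1, e2, e3]; simp only [hqq]; ring
  have hf_cont : Continuous (Function.uncurry f) :=
    (hw_cont.comp (continuous_fst.add continuous_snd)).mul (hqq_cont.comp continuous_fst)
  have hslice : ∀ t : ℝ, Integrable (fun ξ => f ξ t) volume := by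
    intro t
    refine ((hw_int.comp_add_right t).const_mul (2*(uminus-uplus))).mono
      (((hw_cont.comp (continuous_id.add continuous_const)).mul hqq_cont).aestronglyMeasurable)
      (Eventually.of_forall fun ξ => ?_)
    have h1 : 0 ≤ f ξ t := mul_nonneg (hw_nonneg _) (hqq_nonneg ξ)
    have h2 : (0:ℝ) ≤ 2*(uminus-uplus) * (-deriv u (ξ+t)) :=
      mul_nonneg (by linarith) (hw_nonneg _)
    rw [Real.norm_of_nonneg h1, Real.norm_of_nonneg h2]
    have := mul_le_mul_of_nonneg_left (hqq_ub ξ) (hw_nonneg (ξ+t))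
    simp only [hf]; linarith
  have hslice_norm : ∀ t : ℝ, ∫ ξ, ‖f ξ t‖ ≤ 2*(uminus-uplus) * ∫ x, -deriv u x := by
    intro t
    have hle : ∀ ξ, ‖f ξ t‖ ≤ 2*(uminus-uplus) * (-deriv u (ξ+t)) := by
      intro ξ
      have h1 : 0 ≤ f ξ t := mul_nonneg (hw_nonneg _) (hqq_nonneg ξ)
      rw [Real.norm_of_nonneg h1]
      have := mul_le_mul_of_nonneg_left (hqq_ub ξ) (hw_nonneg (ξ+t))
      simp only [hf]; linarith
    calc ∫ ξ, ‖f ξ t‖ ≤ ∫ ξ, 2*(uminus-uplus) * (-deriv u (ξ+t)) :=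
          integral_mono (hslice t).norm ((hw_int.comp_add_right t).const_mul _) hle
      _ = 2*(uminus-uplus) * ∫ ξ, -deriv u (ξ+t) := integral_const_mul _ _
      _ = 2*(uminus-uplus) * ∫ x, -deriv u x := by
          rw [integral_add_right_eq_self (fun x : ℝ => -deriv u x) t]
  have hprod : Integrable (Function.uncurry f) (volume.prod ν) := by
    refine (integrable_prod_iff' hf_cont.aestronglyMeasurable).mpr ⟨?_, ?_⟩
    · exact Eventually.of_forall fun t => hslice t
    · have hgm : Continuous (fun p : ℝ × ℝ => ‖f p.2 p.1‖) := by
        apply Continuous.norm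
        exact (hw_cont.comp (continuous_snd.add continuous_fst)).mul (hqq_cont.comp continuous_snd)
      have hmeas : AEStronglyMeasurable (fun t => ∫ ξ, ‖f ξ t‖ ∂(volume : Measure ℝ)) ν :=
        AEStronglyMeasurable.integral_prod_right'
          (f := fun p : ℝ × ℝ => ‖f p.2 p.1‖) hgm.aestronglyMeasurable
      refine (integrable_const (2*(uminus-uplus) * ∫ x, -deriv u x)).mono hmeas
        (Eventually.of_forall fun t => ?_)
      have h1 : 0 ≤ ∫ ξ, ‖f ξ t‖ := integral_nonneg fun ξ => norm_nonneg _
      have h2 : (0:ℝ) ≤ 2*(uminus-uplus) * ∫ x, -deriv u x :=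
        mul_nonneg (by linarith) (integral_nonneg hw_nonneg)
      show ‖∫ ξ, ‖f ξ t‖‖ ≤ ‖2*(uminus-uplus) * ∫ x, -deriv u x‖
      rw [Real.norm_of_nonneg h1, Real.norm_of_nonneg h2]
      exact hslice_norm t
  have hswap : ∫ ξ : ℝ, ((u (ξ + s2) - u ξ)^2 - (u (ξ + s1) - u ξ)^2)
      = ∫ t, (∫ ξ, f ξ t) ∂ν := by
    calc ∫ ξ : ℝ, ((u (ξ + s2) - u ξ)^2 - (u (ξ + s1) - u ξ)^2)
        = ∫ ξ : ℝ, ∫ t, f ξ t ∂ν := by simp_rw [hA]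
      _ = ∫ t, (∫ ξ, f ξ t) ∂ν := integral_integral_swap hprod
  have hshift_int : ∀ t : ℝ, Integrable (fun ζ : ℝ => (-deriv u ζ) * qq (ζ - t)) := by
    intro t
    refine (hw_int.const_mul (2*(uminus-uplus))).mono
      ((hw_cont.mul (hqq_cont.comp (continuous_id.sub continuous_const))).aestronglyMeasurable)
      (Eventually.of_forall fun ζ => ?_)
    rw [Real.norm_of_nonneg (mul_nonneg (hw_nonneg ζ) (hqq_nonneg _)),
      Real.norm_of_nonneg (mul_nonneg (by linarith) (hw_nonneg ζ))]
    have := mul_le_mul_of_nonneg_left (hqq_ub (ζ - t)) (hw_nonneg ζ)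
    linarith
  have hinner : ∀ t ∈ Ioc s1 s2, β ≤ ∫ ξ, f ξ t := by
    intro t ht
    have hchg : ∫ ξ, f ξ t = ∫ ζ, (-deriv u ζ) * qq (ζ - t) := by
      rw [← integral_add_right_eq_self (fun ζ : ℝ => (-deriv u ζ) * qq (ζ - t)) t]
      congr 1; funext ξ; rw [add_sub_cancel_right]
    rw [hchg, hβ]
    refine integral_mono hβ_int (hshift_int t) ?_
    intro ζ
    have ht1 : 1 < t := lt_of_lt_of_le hs1 (le_of_lt ht.1)
    have hmono1 : u (ζ - 1) ≤ u (ζ - t) := hanti.antitone (by linarith)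
    have hmono2 : u (ζ - t + s2) ≤ u ζ := hanti.antitone (by linarith [ht.2])
    have hmono3 : u (ζ - t + s1) ≤ u (ζ - t) := hanti.antitone (by linarith)
    have hle : u (ζ - 1) - u ζ ≤ qq (ζ - t) := by simp only [hqq]; linarith
    exact mul_le_mul_of_nonneg_left hle (hw_nonneg ζ)
  have houter : β * (s2 - s1) ≤ ∫ t, (∫ ξ, f ξ t) ∂ν := by
    have hconst : ∫ _t, β ∂ν = β * (s2 - s1) := by
      rw [hν, setIntegral_const, Real.volume_real_Ioc_of_le h12', smul_eq_mul, mul_comm]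
    rw [← hconst, hν]
    refine setIntegral_mono_on (integrableOn_const measure_Ioc_lt_top.ne) ?_ measurableSet_Ioc hinner
    exact hprod.integral_prod_right
  have hF : ∀ s : ℝ, 0 < s → Integrable (fun ξ : ℝ => (u (ξ + s) - u ξ)^2) := by
    intro s hs
    have hD := hlp_D_int hC1 hanti htop hbot (le_of_lt hs)
    refine (hD.const_mul (uminus - uplus)).mono
      ((((hu.comp (continuous_id.add continuous_const)).sub hu).pow 2).aestronglyMeasurable)
      (Eventually.of_forall fun ξ => ?_)
    have ha0 : 0 ≤ u ξ - u (ξ + s) := sub_nonneg.mpr (hanti.antitone (by linarith))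
    have ha1 : u ξ - u (ξ + s) ≤ uminus - uplus := by
      have := hub ξ; have := hlb (ξ + s); linarith
    rw [Real.norm_of_nonneg (sq_nonneg _),
      Real.norm_of_nonneg (mul_nonneg (by linarith) ha0)]
    nlinarith [mul_le_mul_of_nonneg_right ha1 ha0]
  have hF1 := hF s1 (by linarith)
  have hF2 := hF s2 (by linarith)
  have hsub : ∫ ξ : ℝ, ((u (ξ + s2) - u ξ)^2 - (u (ξ + s1) - u ξ)^2)
      = (∫ ξ : ℝ, (u (ξ + s2) - u ξ)^2) - ∫ ξ : ℝ, (u (ξ + s1) - u ξ)^2 :=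
    integral_sub hF2 hF1
  linarith [hswap, houter, hsub]
theorem stmt_19 (u : ℝ → ℝ) (uminus uplus : ℝ)
    (hC1 : ContDiff ℝ 1 u) (hanti : StrictAnti u)
    (hint : Integrable (deriv u)) (hL2 : MemLp (deriv u) 2 volume)
    (htop : Filter.Tendsto u Filter.atTop (nhds uplus))
    (hbot : Filter.Tendsto u Filter.atBot (nhds uminus))
    (Q : ℝ → ℝ) (hQ : ∀ s, Q s = ∫ ξ : ℝ, (u (ξ + s) - u ξ)^2) :
    (∀ s, Q s = Q (-s)) ∧ Q 0 = 0 ∧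
    ∃ β₁ > (0:ℝ), ∃ β₂ > (0:ℝ),
      (∀ s : ℝ, 1 < s → ∀ d : ℝ, HasDerivAt Q d s → β₁ ≤ d) ∧
      (∀ s : ℝ, s < -1 → ∀ d : ℝ, HasDerivAt Q d s → d ≤ -β₂) ∧
      (∀ s : ℝ, |s| ≤ Q s / min β₁ β₂ + 1) := by
  have heven : ∀ s, Q s = Q (-s) := by
    intro s
    rw [hQ, hQ]
    have hpt : ∀ ξ : ℝ, (u (ξ + -s) - u ξ)^2
        = (fun ζ => (u (ζ + s) - u ζ)^2) (ξ + -s) := by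
      intro ξ
      have hx : ξ + -s + s = ξ := by ring
      simp only [hx]
      ring
    rw [show (∫ ξ : ℝ, (u (ξ + -s) - u ξ)^2)
        = ∫ ξ : ℝ, (fun ζ => (u (ζ + s) - u ζ)^2) (ξ + -s) from by simp_rw [hpt],
      integral_add_right_eq_self (fun ζ => (u (ζ + s) - u ζ)^2) (-s)]
  have hQ0 : Q 0 = 0 := by rw [hQ]; simp
  have hQnn : ∀ s, 0 ≤ Q s := by
    intro s; rw [hQ]; exact integral_nonneg fun ξ => sq_nonneg _
  obtain ⟨β, hβpos, hkey⟩ := hlp_key u uminus uplus hC1 hanti hint htop hbot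
  have hkeyQ : ∀ s1 s2 : ℝ, 1 < s1 → s1 < s2 → Q s1 + β * (s2 - s1) ≤ Q s2 := by
    intro s1 s2 h1 h2; rw [hQ, hQ]; exact hkey s1 s2 h1 h2
  have hgrow : ∀ s : ℝ, 1 < s → β * (s - 1) ≤ Q s := by
    intro s hs
    have hev : ∀ᶠ x in nhdsWithin 1 (Ioi 1), β * (s - x) ≤ Q s := by
      filter_upwards [Ioo_mem_nhdsGT_of_mem (Set.mem_Ico.mpr ⟨le_refl 1, hs⟩)] with x hx
      have h1 := hkeyQ x s hx.1 hx.2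
      have h2 := hQnn x
      linarith
    have htd : Filter.Tendsto (fun x : ℝ => β * (s - x)) (nhdsWithin 1 (Ioi 1))
        (nhds (β * (s - 1))) :=
      ((continuous_const.mul (continuous_const.sub continuous_id)).tendsto 1).mono_left
        nhdsWithin_le_nhds
    exact le_of_tendsto htd hev
  have hderiv_pos : ∀ s : ℝ, 1 < s → ∀ d : ℝ, HasDerivAt Q d s → β ≤ d := by
    intro s hs d hd
    refine ge_of_tendsto (hasDerivAt_iff_tendsto_slope.mp hd) ?_
    have hmem : ∀ᶠ x in nhdsWithin s {s}ᶜ, x ∈ Ioo (1:ℝ) (s+1) :=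
      eventually_nhdsWithin_of_eventually_nhds
        (isOpen_Ioo.eventually_mem (Set.mem_Ioo.mpr ⟨hs, lt_add_one s⟩))
    filter_upwards [hmem, eventually_mem_nhdsWithin] with x hx (hxne : x ∈ ({s}ᶜ : Set ℝ))
    have hxs : x ≠ s := hxne
    rw [slope_def_field]
    rcases lt_or_gt_of_ne hxs with h' | h'
    · have hk := hkeyQ x s hx.1 h'
      rw [le_div_iff_of_neg (by linarith : x - s < 0)]
      linarith
    · have hk := hkeyQ s x hs h'
      rw [le_div_iff₀ (by linarith : 0 < x - s)]
      linarith
  refine ⟨heven, hQ0, β, hβpos, β, hβpos, hderiv_pos, ?_, ?_⟩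
  · -- s < -1
    intro s hs d hd
    have h1 : HasDerivAt (fun x : ℝ => Q (-x)) (d * -1) (-s) := by
      have hneg : HasDerivAt (fun x : ℝ => -x) (-1 : ℝ) (-s) := by
        simpa using (hasDerivAt_neg (-s))
      have hd' : HasDerivAt Q d (-(-s)) := by rwa [neg_neg]
      have := hd'.comp (-s) hneg
      exact this
    have hfun : (fun x : ℝ => Q (-x)) = Q := funext fun x => (heven x).symm
    rw [hfun] at h1
    have := hderiv_pos (-s) (by linarith) (d * -1) h1
    linarith
  · -- coercivity
    intro s
    rw [min_self]
    rcases le_or_gt |s| 1 with h | h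
    · have : 0 ≤ Q s / β := div_nonneg (hQnn s) (le_of_lt hβpos)
      linarith
    · rcases lt_or_ge s 0 with hneg | hpos
      · have hs1 : s < -1 := by
          rcases abs_cases s with ⟨ha, _⟩ | ⟨ha, _⟩ <;> linarith
        have hg := hgrow (-s) (by linarith)
        rw [← heven s] at hg
        have habs : |s| = -s := abs_of_neg hneg
        rw [habs, ← sub_le_iff_le_add, sub_le_iff_le_add']
        have : -s - 1 ≤ Q s / β := by
          rw [le_div_iff₀ hβpos]
          linarith [hg]
        linarith
      · have hs1 : 1 < s := by
          rw [abs_of_nonneg hpos] at h; exact h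
        have hg := hgrow s hs1
        have habs : |s| = s := abs_of_nonneg hpos
        rw [habs]
        have : s - 1 ≤ Q s / β := by
          rw [le_div_iff₀ hβpos]
          linarith [hg]
        linarith
end
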